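/- Let G be a group acting on a set X and let M ⊆ X be a subset that is commensurated by the G-action (i.e., for every g ∈ G the symmetric difference M △ gM is finite). Then the map tr_M : G → ℤ defined by tr_M(g) = #(M \ g⁻¹M) − #(g⁻¹M \ M) is a group homomorphism. -/
import Mathlib


open Pointwise

private lemma tc_key {X : Type*} (a b : Set X) (ha : a.Finite) (hb : b.Finite) :
    ((a \ b).ncard : ℤ) - ((b \ a).ncard : ℤ) = (a.ncard : ℤ) - b.ncard := by
  have h1 : (a \ b).ncard + (a ∩ b).ncard = a.ncard := by
    rw [← Set.ncard_diff_add_ncard_of_subset Set.inter_subset_left ha]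
    congr 2
    ext x; simp (config := {contextual := true}) [not_and]
  have h2 : (b \ a).ncard + (a ∩ b).ncard = b.ncard := by
    rw [← Set.ncard_diff_add_ncard_of_subset Set.inter_subset_right hb]
    congr 2
    ext x; simp (config := {contextual := true}) [not_and]
  omega

private lemma tc_diff_subset_symmDiff {X : Type*} (a b : Set X) : a \ b ⊆ symmDiff a b :=
  Set.subset_union_left

private lemma tc_cocycle {X : Type*} (A B C : Set X) (hAB : (symmDiff A B).Finite)
    (hBC : (symmDiff B C).Finite) :
    ((A \ C).ncard : ℤ) - ((C \ A).ncard : ℤ) =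
      (((A \ B).ncard : ℤ) - ((B \ A).ncard : ℤ)) +
      (((B \ C).ncard : ℤ) - ((C \ B).ncard : ℤ)) := by
  set F : Set X := symmDiff A B ∪ symmDiff B C with hF
  have hFfin : F.Finite := hAB.union hBC
  have hAC : symmDiff A C ⊆ F := symmDiff_triangle A B C
  have eAB : A \ B = (A ∩ F) \ (B ∩ F) := by
    ext x; constructor
    · intro hx
      exact ⟨⟨hx.1, Or.inl (Or.inl hx)⟩, fun h => hx.2 h.1⟩
    · intro hx
      exact ⟨hx.1.1, fun h => hx.2 ⟨h, hx.1.2⟩⟩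
  have eBA : B \ A = (B ∩ F) \ (A ∩ F) := by
    ext x; constructor
    · intro hx
      exact ⟨⟨hx.1, Or.inl (Or.inr hx)⟩, fun h => hx.2 h.1⟩
    · intro hx
      exact ⟨hx.1.1, fun h => hx.2 ⟨h, hx.1.2⟩⟩
  have eBC : B \ C = (B ∩ F) \ (C ∩ F) := by
    ext x; constructor
    · intro hx
      exact ⟨⟨hx.1, Or.inr (Or.inl hx)⟩, fun h => hx.2 h.1⟩
    · intro hx
      exact ⟨hx.1.1, fun h => hx.2 ⟨h, hx.1.2⟩⟩
  have eCB : C \ B = (C ∩ F) \ (B ∩ F) := by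
    ext x; constructor
    · intro hx
      exact ⟨⟨hx.1, Or.inr (Or.inr hx)⟩, fun h => hx.2 h.1⟩
    · intro hx
      exact ⟨hx.1.1, fun h => hx.2 ⟨h, hx.1.2⟩⟩
  have eAC : A \ C = (A ∩ F) \ (C ∩ F) := by
    ext x; constructor
    · intro hx
      exact ⟨⟨hx.1, hAC (Or.inl hx)⟩, fun h => hx.2 h.1⟩
    · intro hx
      exact ⟨hx.1.1, fun h => hx.2 ⟨h, hx.1.2⟩⟩
  have eCA : C \ A = (C ∩ F) \ (A ∩ F) := by
    ext x; constructor
    · intro hx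
      exact ⟨⟨hx.1, hAC (Or.inr hx)⟩, fun h => hx.2 h.1⟩
    · intro hx
      exact ⟨hx.1.1, fun h => hx.2 ⟨h, hx.1.2⟩⟩
  have ha : (A ∩ F).Finite := hFfin.inter_of_right A
  have hb : (B ∩ F).Finite := hFfin.inter_of_right B
  have hc : (C ∩ F).Finite := hFfin.inter_of_right C
  rw [eAB, eBA, eBC, eCB, eAC, eCA, tc_key _ _ ha hc, tc_key _ _ ha hb, tc_key _ _ hb hc]
  ring

theorem transfer_char_isHom {G X : Type*} [Group G] [MulAction G X] (M : Set X)
    (hM : ∀ g : G, (symmDiff M (g • M)).Finite) :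
    ∀ g h : G,
      (((M \ ((g * h)⁻¹ • M)).ncard : ℤ) - ((((g * h)⁻¹ • M) \ M).ncard : ℤ)) =
        (((M \ (g⁻¹ • M)).ncard : ℤ) - (((g⁻¹ • M) \ M).ncard : ℤ)) +
        (((M \ (h⁻¹ • M)).ncard : ℤ) - (((h⁻¹ • M) \ M).ncard : ℤ)) := by
  intro g h
  have hsm : (g * h)⁻¹ • M = h⁻¹ • (g⁻¹ • M) := by
    rw [mul_inv_rev, mul_smul]
  have h1 : (symmDiff M (h⁻¹ • M)).Finite := hM h⁻¹
  have h2 : (symmDiff (h⁻¹ • M) (h⁻¹ • (g⁻¹ • M))).Finite := by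
    have : symmDiff (h⁻¹ • M) (h⁻¹ • (g⁻¹ • M)) = h⁻¹ • symmDiff M (g⁻¹ • M) := by
      simp [Set.symmDiff_def, Set.smul_set_union, Set.smul_set_sdiff]
    rw [this]
    exact (hM g⁻¹).smul_set
  have key := tc_cocycle M (h⁻¹ • M) (h⁻¹ • (g⁻¹ • M)) h1 h2
  rw [hsm, key]
  have e1 : (h⁻¹ • (g⁻¹ • M)) \ (h⁻¹ • M) = h⁻¹ • ((g⁻¹ • M) \ M) := (Set.smul_set_sdiff).symm
  have e2 : (h⁻¹ • M) \ (h⁻¹ • (g⁻¹ • M)) = h⁻¹ • (M \ (g⁻¹ • M)) := (Set.smul_set_sdiff).symm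
  rw [e1, e2, Set.ncard_smul_set, Set.ncard_smul_set]
  ring
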